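/- arXiv:2405.09505 — 2 statements merged into one kernel-verified Lean document; each statement's English description precedes it below -/
import Mathlib

section
/- Let l be a subdegree sequence, let a ≥ 0 be the multiplicity of the entry 1 in l, and let d ≥ 3 be an integer. Then: (1) R(l,d) < 106; (2) if l has at least two distinct entries, then R(l,d) < 60; (3) if a ≥ 1 then R(l,d) < 11, and if a ≥ 2 then R(l,d) < 3. -/
/-- Collins' function `JC`: the maximal order of a finite primitive subgroup of
`PGL(r,ℂ)`. -/
def JC : ℕ → ℕ
  | 1 => 1
  | 2 => 60
  | 3 => 360
  | 4 => 25920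
  | 5 => 25920
  | 6 => 6531840
  | 7 => 1451520
  | 8 => 348364800
  | 9 => 4199040
  | 12 => 448345497600
  | r => (r + 1).factorial

/-- A subdegree sequence, recorded as the multiset of its entries: it must be nonempty
and all entries must be positive. -/
def IsSubdegreeSeq (l : Multiset ℕ) : Prop := l ≠ 0 ∧ ∀ x ∈ l, 0 < x

/-- The Fermat-test ratio `R(l,d)`. -/
def FTR (l : Multiset ℕ) (d : ℕ) : ℚ :=
  ((d ^ (Multiset.card l) * (l.map JC).prod
      * ∏ x ∈ l.toFinset, (l.count x).factorial : ℕ) : ℚ)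
    / ((d ^ l.sum * l.sum.factorial : ℕ) : ℚ)

namespace FTRBounds

/-- The numerator of the Fermat-test ratio at `d = 3`. -/
def Nn (l : Multiset ℕ) : ℕ :=
  3 ^ (Multiset.card l) * (l.map JC).prod * ∏ x ∈ l.toFinset, (l.count x).factorial

/-- The denominator of the Fermat-test ratio at `d = 3`. -/
def Dn (l : Multiset ℕ) : ℕ := 3 ^ l.sum * l.sum.factorial

lemma JC_add13 (n : ℕ) : JC (n + 13) = (n + 14).factorial := rfl

lemma JC_pos (x : ℕ) : 0 < JC x := by
  by_cases h : x ≤ 12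
  · interval_cases x <;> decide
  · obtain ⟨n, rfl⟩ : ∃ n, x = n + 13 := ⟨x - 13, by omega⟩
    rw [JC_add13]
    exact Nat.factorial_pos _

lemma three_pow_big (n : ℕ) (hn : 3 ≤ n) : 3 * (n + 1) ≤ 3 ^ n := by
  induction n, hn using Nat.le_induction with
  | base => decide
  | succ n hn ih =>
      have h3 : (3:ℕ)^(n+1) = 3 * 3^n := by ring
      omega

lemma le_choose_mul (k m : ℕ) : k ≤ (k * (m + 1)).choose (m + 1) := by
  induction k with
  | zero => simp
  | succ k ih =>
      have h1 : (k + 1) * (m + 1) = (k * (m + 1) + m) + 1 := by ring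
      rw [h1, Nat.choose_succ_succ]
      have h2 : 0 < (k * (m + 1) + m).choose m := Nat.choose_pos (by omega)
      have h3 : (k * (m + 1)).choose (m + 1) ≤ (k * (m + 1) + m).choose (m + 1) :=
        Nat.choose_le_choose _ (by omega)
      simp only [Nat.succ_eq_add_one] at *
      omega

lemma asc_mono (k a b : ℕ) (h : a ≤ b) : (a + 1).ascFactorial k ≤ (b + 1).ascFactorial k := by
  rw [Nat.ascFactorial_eq_factorial_mul_choose, Nat.ascFactorial_eq_factorial_mul_choose]
  exact Nat.mul_le_mul_left _ (Nat.choose_le_choose _ (by omega))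

lemma ks_core (x k w c L : ℕ) (hx : 1 ≤ x) (h1 : x * k ≤ w + x)
    (hbase : 3 * c ≤ 3 ^ x * x * L) (hL : L ≤ (w + 1).ascFactorial (x - 1)) :
    3 * c * k ≤ 3 ^ x * (w + 1).ascFactorial x := by
  have hx' : x - 1 + 1 = x := by omega
  have hw : w + 1 + (x - 1) = w + x := by omega
  calc 3 * c * k ≤ (3 ^ x * x * L) * k := Nat.mul_le_mul_right _ hbase
    _ ≤ (3 ^ x * x * ((w + 1).ascFactorial (x - 1))) * k :=
        Nat.mul_le_mul_right _ (Nat.mul_le_mul_left _ hL)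
    _ = 3 ^ x * ((w + 1).ascFactorial (x - 1)) * (x * k) := by ring
    _ ≤ 3 ^ x * ((w + 1).ascFactorial (x - 1)) * (w + x) :=
        Nat.mul_le_mul_left _ h1
    _ = 3 ^ x * ((w + 1 + (x - 1)) * (w + 1).ascFactorial (x - 1)) := by rw [hw]; ring
    _ = 3 ^ x * (w + 1).ascFactorial ((x - 1) + 1) := by rw [Nat.ascFactorial_succ]
    _ = 3 ^ x * (w + 1).ascFactorial x := by rw [hx']

/-- The key numeric step inequality: removing one entry `x` (present with multiplicity `k`)
from a sequence of total degree `w + x ≥ 11` decreases the (d=3)-ratio. -/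
lemma ks (x k w : ℕ) (hx : 2 ≤ x) (hkx : k * x ≤ w + x) (hv : 11 ≤ w + x) :
    3 * JC x * k ≤ 3 ^ x * (w + 1).ascFactorial x := by
  by_cases h12 : x ≤ 12
  · interval_cases x
    · exact ks_core 2 k w _ 10 (by omega) (by omega) (by decide)
        (le_trans (by decide) (asc_mono _ 9 w (by omega)))
    · exact ks_core 3 k w _ 90 (by omega) (by omega) (by decide)
        (le_trans (by decide) (asc_mono _ 8 w (by omega)))
    · exact ks_core 4 k w _ 720 (by omega) (by omega) (by decide)
        (le_trans (by decide) (asc_mono _ 7 w (by omega)))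
    · exact ks_core 5 k w _ 5040 (by omega) (by omega) (by decide)
        (le_trans (by decide) (asc_mono _ 6 w (by omega)))
    · exact ks_core 6 k w _ 30240 (by omega) (by omega) (by decide)
        (le_trans (by decide) (asc_mono _ 5 w (by omega)))
    · exact ks_core 7 k w _ 151200 (by omega) (by omega) (by decide)
        (le_trans (by decide) (asc_mono _ 4 w (by omega)))
    · exact ks_core 8 k w _ 604800 (by omega) (by omega) (by decide)
        (le_trans (by decide) (asc_mono _ 3 w (by omega)))
    · exact ks_core 9 k w _ 1814400 (by omega) (by omega) (by decide)
        (le_trans (by decide) (asc_mono _ 2 w (by omega)))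
    · exact ks_core 10 k w _ 3628800 (by omega) (by omega) (by decide)
        (le_trans (by decide) (asc_mono _ 1 w (by omega)))
    · exact ks_core 11 k w _ 3628800 (by omega) (by omega) (by decide)
        (le_trans (by decide) (asc_mono _ 0 w (by omega)))
    · exact ks_core 12 k w _ 39916800 (by omega) (by omega) (by decide)
        (le_trans (by decide) (asc_mono _ 0 w (by omega)))
  · -- x ≥ 13: here `JC x = (x+1)!` and the ratio step is very small.
    obtain ⟨n, rfl⟩ : ∃ n, x = n + 13 := ⟨x - 13, by omega⟩
    rw [JC_add13]
    have hch : k ≤ (w + (n + 13)).choose (n + 13) := by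
      calc k ≤ (k * (n + 13)).choose (n + 13) := by
              have := le_choose_mul k (n + 12)
              simpa using this
        _ ≤ (w + (n + 13)).choose (n + 13) := Nat.choose_le_choose _ (by omega)
    have h3 : 3 * (n + 14) ≤ 3 ^ (n + 13) := by
      have := three_pow_big (n + 13) (by omega)
      omega
    calc 3 * (n + 14).factorial * k
        = (3 * (n + 14)) * ((n + 13).factorial * k) := by
          rw [Nat.factorial_succ]; ring
      _ ≤ (3 ^ (n + 13)) * ((n + 13).factorial * ((w + (n + 13)).choose (n + 13))) :=
          Nat.mul_le_mul h3 (Nat.mul_le_mul_left _ hch)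
      _ = 3 ^ (n + 13) * (w + 1).ascFactorial (n + 13) := by
          rw [Nat.ascFactorial_eq_factorial_mul_choose]

lemma prodfac_cons (x : ℕ) (t : Multiset ℕ) :
    ∏ y ∈ (x ::ₘ t).toFinset, ((x ::ₘ t).count y).factorial
      = (t.count x + 1) * ∏ y ∈ t.toFinset, (t.count y).factorial := by
  by_cases hx : x ∈ t
  · have hxf : x ∈ t.toFinset := Multiset.mem_toFinset.2 hx
    have hts : (x ::ₘ t).toFinset = t.toFinset := by
      rw [Multiset.toFinset_cons]
      exact Finset.insert_eq_self.2 hxf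
    rw [hts, ← Finset.mul_prod_erase _ _ hxf, ← Finset.mul_prod_erase _ _ hxf]
    have hocount : ∀ y ∈ t.toFinset.erase x,
        ((x ::ₘ t).count y).factorial = (t.count y).factorial := by
      intro y hy
      rw [Multiset.count_cons_of_ne (Finset.ne_of_mem_erase hy) t]
    rw [Finset.prod_congr rfl hocount, Multiset.count_cons_self, Nat.factorial_succ]
    ring
  · have hxf : x ∉ t.toFinset := fun h => hx (Multiset.mem_toFinset.1 h)
    have hc0 : t.count x = 0 := Multiset.count_eq_zero.2 hx
    rw [Multiset.toFinset_cons, Finset.prod_insert hxf]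
    have hocount : ∀ y ∈ t.toFinset,
        ((x ::ₘ t).count y).factorial = (t.count y).factorial := by
      intro y hy
      have : y ≠ x := fun h => hxf (h ▸ hy)
      rw [Multiset.count_cons_of_ne this t]
    rw [Finset.prod_congr rfl hocount, Multiset.count_cons_self, hc0]
    simp

lemma Nn_cons (x : ℕ) (t : Multiset ℕ) :
    Nn (x ::ₘ t) = 3 * JC x * (t.count x + 1) * Nn t := by
  unfold Nn
  rw [Multiset.card_cons, Multiset.map_cons, Multiset.prod_cons, prodfac_cons, pow_succ]
  ring

lemma Dn_cons (x : ℕ) (t : Multiset ℕ) :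
    Dn (x ::ₘ t) = (3 ^ x * (t.sum + 1).ascFactorial x) * Dn t := by
  unfold Dn
  rw [Multiset.sum_cons]
  have h1 : (x + t.sum).factorial = t.sum.factorial * (t.sum + 1).ascFactorial x := by
    rw [Nat.factorial_mul_ascFactorial, Nat.add_comm]
  rw [h1, pow_add]
  ring

lemma Dn_pos (l : Multiset ℕ) : 0 < Dn l :=
  Nat.mul_pos (Nat.pow_pos (by norm_num)) (Nat.factorial_pos _)

lemma count_mul_le_sum (l : Multiset ℕ) (x : ℕ) : l.count x * x ≤ l.sum := by
  induction l using Multiset.induction with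
  | empty => simp
  | cons a t ih =>
      rw [Multiset.sum_cons]
      by_cases h : x = a
      · subst h; rw [Multiset.count_cons_self]
        have : (t.count x + 1) * x = t.count x * x + x := by ring
        omega
      · rw [Multiset.count_cons_of_ne h]
        omega

lemma card_le_sum (l : Multiset ℕ) (h : ∀ x ∈ l, 0 < x) : Multiset.card l ≤ l.sum := by
  induction l using Multiset.induction with
  | empty => simp
  | cons a t ih =>
      rw [Multiset.sum_cons, Multiset.card_cons]
      have ha : 0 < a := h a (Multiset.mem_cons_self a t)
      have := ih (fun x hx => h x (Multiset.mem_cons_of_mem hx))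
      omega

/-- The one-step removal bound, `≤` version. -/
lemma step_le (a c x : ℕ) (t : Multiset ℕ) (hx : 2 ≤ x) (hv : 11 ≤ x + t.sum)
    (h : a * Nn t ≤ c * Dn t) : a * Nn (x ::ₘ t) ≤ c * Dn (x ::ₘ t) := by
  have hcount : ((x ::ₘ t).count x) * x ≤ (x ::ₘ t).sum := count_mul_le_sum _ x
  rw [Multiset.count_cons_self, Multiset.sum_cons] at hcount
  have hkx : (t.count x + 1) * x ≤ t.sum + x := by omega
  have hks := ks x (t.count x + 1) t.sum hx hkx (by omega)
  calc a * Nn (x ::ₘ t) = (3 * JC x * (t.count x + 1)) * (a * Nn t) := by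
        rw [Nn_cons]; ring
    _ ≤ (3 * JC x * (t.count x + 1)) * (c * Dn t) := Nat.mul_le_mul_left _ h
    _ ≤ (3 ^ x * (t.sum + 1).ascFactorial x) * (c * Dn t) := Nat.mul_le_mul_right _ hks
    _ = c * Dn (x ::ₘ t) := by rw [Dn_cons]; ring

/-- The one-step removal bound, `<` version. -/
lemma step_lt (a c x : ℕ) (t : Multiset ℕ) (hx : 2 ≤ x) (hv : 11 ≤ x + t.sum)
    (h : a * Nn t < c * Dn t) : a * Nn (x ::ₘ t) < c * Dn (x ::ₘ t) := by
  have hcount : ((x ::ₘ t).count x) * x ≤ (x ::ₘ t).sum := count_mul_le_sum _ x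
  rw [Multiset.count_cons_self, Multiset.sum_cons] at hcount
  have hkx : (t.count x + 1) * x ≤ t.sum + x := by omega
  have hks := ks x (t.count x + 1) t.sum hx hkx (by omega)
  have hpos : 0 < 3 * JC x * (t.count x + 1) :=
    Nat.mul_pos (Nat.mul_pos (by norm_num) (JC_pos x)) (Nat.succ_pos _)
  calc a * Nn (x ::ₘ t) = (3 * JC x * (t.count x + 1)) * (a * Nn t) := by
        rw [Nn_cons]; ring
    _ < (3 * JC x * (t.count x + 1)) * (c * Dn t) := by
        exact (Nat.mul_lt_mul_left hpos).2 h
    _ ≤ (3 ^ x * (t.sum + 1).ascFactorial x) * (c * Dn t) := Nat.mul_le_mul_right _ hks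
    _ = c * Dn (x ::ₘ t) := by rw [Dn_cons]; ring

/-- The singleton bound `R({x},3) ≤ 40`. -/
lemma sing (y : ℕ) : Nn {y} ≤ 40 * Dn {y} := by
  have hN : Nn {y} = 3 * JC y := by
    simp [Nn]
  have hD : Dn {y} = 3 ^ y * y.factorial := by
    simp [Dn]
  rw [hN, hD]
  by_cases h : y ≤ 12
  · interval_cases y <;> decide
  · obtain ⟨n, rfl⟩ : ∃ n, y = n + 13 := ⟨y - 13, by omega⟩
    rw [JC_add13]
    have h3 : 3 * (n + 14) ≤ 3 ^ (n + 13) := by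
      have := three_pow_big (n + 13) (by omega)
      omega
    calc 3 * (n + 14).factorial = (3 * (n + 14)) * (n + 13).factorial := by
          rw [Nat.factorial_succ]; ring
      _ ≤ (3 ^ (n + 13)) * (n + 13).factorial := Nat.mul_le_mul_right _ h3
      _ ≤ 40 * (3 ^ (n + 13) * (n + 13).factorial) := by omega

/-- Base case: all subdegree sequences with entries ≥ 2 and total degree ≤ 10. -/
lemma base (L : List ℕ) (h2 : ∀ x ∈ L, 2 ≤ x) (hs : L.sum ≤ 10) :
    (Nn ↑L < 106 * Dn ↑L) ∧
    (2 ≤ (L : Multiset ℕ).toFinset.card → Nn ↑L < 60 * Dn ↑L) ∧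
    (Nn ↑L < 11 * ((L : Multiset ℕ).sum + 1) * Dn ↑L) ∧
    (2 * Nn ↑L < 3 * (((L : Multiset ℕ).sum + 1) * ((L : Multiset ℕ).sum + 2)) * Dn ↑L) := by
  rcases L with _ | ⟨a, _ | ⟨b, _ | ⟨c, _ | ⟨d, _ | ⟨e, _ | ⟨f, r⟩⟩⟩⟩⟩⟩
  · decide
  · have ha := h2 a (by simp)
    simp only [List.sum_cons, List.sum_nil] at hs
    have ha' : a ≤ 10 := by omega
    interval_cases a <;> decide
  · have ha := h2 a (by simp)
    have hb := h2 b (by simp)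
    simp only [List.sum_cons, List.sum_nil] at hs
    have ha' : a ≤ 8 := by omega
    have hb' : b ≤ 8 := by omega
    interval_cases a <;> interval_cases b <;> first | (exfalso; omega) | decide
  · have ha := h2 a (by simp)
    have hb := h2 b (by simp)
    have hc := h2 c (by simp)
    simp only [List.sum_cons, List.sum_nil] at hs
    have ha' : a ≤ 6 := by omega
    have hb' : b ≤ 6 := by omega
    have hc' : c ≤ 6 := by omega
    interval_cases a <;> interval_cases b <;> interval_cases c <;>
      first | (exfalso; omega) | decide
  · have ha := h2 a (by simp)
    have hb := h2 b (by simp)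
    have hc := h2 c (by simp)
    have hd := h2 d (by simp)
    simp only [List.sum_cons, List.sum_nil] at hs
    have ha' : a ≤ 4 := by omega
    have hb' : b ≤ 4 := by omega
    have hc' : c ≤ 4 := by omega
    have hd' : d ≤ 4 := by omega
    interval_cases a <;> interval_cases b <;> interval_cases c <;> interval_cases d <;>
      first | (exfalso; omega) | decide
  · have ha := h2 a (by simp)
    have hb := h2 b (by simp)
    have hc := h2 c (by simp)
    have hd := h2 d (by simp)
    have he := h2 e (by simp)
    simp only [List.sum_cons, List.sum_nil] at hs
    have ha' : a ≤ 2 := by omega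
    have hb' : b ≤ 2 := by omega
    have hc' : c ≤ 2 := by omega
    have hd' : d ≤ 2 := by omega
    have he' : e ≤ 2 := by omega
    interval_cases a <;> interval_cases b <;> interval_cases c <;> interval_cases d <;>
      interval_cases e <;> first | (exfalso; omega) | decide
  · exfalso
    have ha := h2 a (by simp)
    have hb := h2 b (by simp)
    have hc := h2 c (by simp)
    have hd := h2 d (by simp)
    have he := h2 e (by simp)
    have hf := h2 f (by simp)
    simp only [List.sum_cons] at hs
    omega

/-- The master bounds for `1`-free subdegree sequences. -/
lemma master : ∀ (n : ℕ) (l : Multiset ℕ), l.sum = n → (∀ x ∈ l, 2 ≤ x) →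
    (Nn l < 106 * Dn l) ∧
    (2 ≤ l.toFinset.card → Nn l < 60 * Dn l) ∧
    (Nn l < 11 * (l.sum + 1) * Dn l) ∧
    (2 * Nn l < 3 * ((l.sum + 1) * (l.sum + 2)) * Dn l) := by
  intro n
  induction n using Nat.strong_induction_on with
  | _ n ih =>
  intro l hln h2
  by_cases hn : l.sum ≤ 10
  · have hb := base l.toList
      (by intro x hx
          apply h2
          rwa [← Multiset.mem_coe, Multiset.coe_toList] at hx)
      (by rw [← Multiset.sum_coe, Multiset.coe_toList]; exact hn)
    rwa [Multiset.coe_toList] at hb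
  · push_neg at hn
    have hne : l ≠ 0 := by
      intro h0
      rw [h0] at hn
      simp at hn
    -- a generic decomposition for the first, third and fourth bounds
    obtain ⟨x0, hx0⟩ := Multiset.exists_mem_of_ne_zero hne
    obtain ⟨t0, rfl⟩ := Multiset.exists_cons_of_mem hx0
    have hx02 : 2 ≤ x0 := h2 x0 (Multiset.mem_cons_self _ _)
    have h2t0 : ∀ y ∈ t0, 2 ≤ y := fun y hy => h2 y (Multiset.mem_cons_of_mem hy)
    have hsum0 : (x0 ::ₘ t0).sum = x0 + t0.sum := Multiset.sum_cons _ _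
    have hv0 : 11 ≤ x0 + t0.sum := by omega
    have iht0 := ih t0.sum (by omega) t0 rfl h2t0
    refine ⟨?_, ?_, ?_, ?_⟩
    · have := step_lt 1 106 x0 t0 hx02 hv0 (by simpa using iht0.1)
      simpa using this
    · -- the < 60 bound when there are at least two distinct entries
      intro hm
      by_cases hA : ∃ y, y ∈ (x0 ::ₘ t0) ∧ 2 ≤ (x0 ::ₘ t0).count y
      · obtain ⟨y, hy, hyc⟩ := hA
        clear iht0 hv0 hsum0 h2t0 hx02
        obtain ⟨t, ht⟩ := Multiset.exists_cons_of_mem hy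
        rw [ht] at hyc hm h2 hn ⊢
        have hy2 : 2 ≤ y := h2 y (Multiset.mem_cons_self _ _)
        have h2t : ∀ z ∈ t, 2 ≤ z := fun z hz => h2 z (Multiset.mem_cons_of_mem hz)
        have hsum : (y ::ₘ t).sum = y + t.sum := Multiset.sum_cons _ _
        have hyt : y ∈ t := by
          rw [Multiset.count_cons_self] at hyc
          exact Multiset.count_pos.1 (by omega)
        have htf : (y ::ₘ t).toFinset = t.toFinset := by
          rw [Multiset.toFinset_cons]
          exact Finset.insert_eq_self.2 (Multiset.mem_toFinset.2 hyt)
        have hmt : 2 ≤ t.toFinset.card := by rwa [htf] at hm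
        have hnsum : t.sum < n := by
          have : (y ::ₘ t).sum = n := by rw [← ht]; omega
          omega
        have iht := ih t.sum (by omega) t rfl h2t
        have := step_lt 1 60 y t hy2 (by omega) (by simpa using iht.2.1 hmt)
        simpa using this
      · -- all multiplicities are 1
        push_neg at hA
        have hnd : (x0 ::ₘ t0).Nodup := by
          rw [Multiset.nodup_iff_count_le_one]
          intro a
          by_cases hal : a ∈ (x0 ::ₘ t0)
          · have := hA a hal; omega
          · rw [Multiset.count_eq_zero.2 hal]; omega
        by_cases hcard : Multiset.card (x0 ::ₘ t0) = 2
        · -- a pair of two distinct entries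
          obtain ⟨u, v, huv⟩ := Multiset.card_eq_two.1 hcard
          rw [huv] at h2 hn ⊢
          have hu2 : 2 ≤ u := h2 u (by simp)
          have hv2 : 2 ≤ v := h2 v (by simp)
          have hsv : ({v} : Multiset ℕ).sum = v := by simp
          have h40 : Nn ({u, v} : Multiset ℕ) ≤ 40 * Dn ({u, v} : Multiset ℕ) := by
            have hstep := step_le 1 40 u {v} hu2
              (by rw [hsv]; simp [Multiset.sum_cons, Multiset.sum_singleton] at hn; omega)
              (by simpa using sing v)
            simpa [Multiset.insert_eq_cons] using hstep
          have := Dn_pos ({u, v} : Multiset ℕ)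
          omega
        · -- at least three distinct entries: removing one keeps at least two
          have hcard3 : 3 ≤ Multiset.card (x0 ::ₘ t0) := by
            have h1 : (x0 ::ₘ t0).toFinset.card ≤ Multiset.card (x0 ::ₘ t0) :=
              Multiset.toFinset_card_le _
            omega
          have hnd0 : t0.Nodup := (Multiset.nodup_cons.1 hnd).2
          have hx0nt : x0 ∉ t0 := (Multiset.nodup_cons.1 hnd).1
          have hmt : 2 ≤ t0.toFinset.card := by
            rw [Multiset.toFinset_card_of_nodup hnd0]
            have : Multiset.card (x0 ::ₘ t0) = Multiset.card t0 + 1 := Multiset.card_cons _ _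
            omega
          have := step_lt 1 60 x0 t0 hx02 hv0 (by simpa using iht0.2.1 hmt)
          simpa using this
    · have hle : 11 * (t0.sum + 1) ≤ 11 * ((x0 ::ₘ t0).sum + 1) := by
        rw [hsum0]; omega
      have := step_lt 1 (11 * (t0.sum + 1)) x0 t0 hx02 hv0 (by simpa using iht0.2.2.1)
      calc Nn (x0 ::ₘ t0) < 11 * (t0.sum + 1) * Dn (x0 ::ₘ t0) := by simpa using this
        _ ≤ 11 * ((x0 ::ₘ t0).sum + 1) * Dn (x0 ::ₘ t0) :=
            Nat.mul_le_mul_right _ hle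
    · have hle : 3 * ((t0.sum + 1) * (t0.sum + 2)) ≤
          3 * (((x0 ::ₘ t0).sum + 1) * ((x0 ::ₘ t0).sum + 2)) := by
        rw [hsum0]
        have := Nat.mul_le_mul (show t0.sum + 1 ≤ x0 + t0.sum + 1 by omega)
          (show t0.sum + 2 ≤ x0 + t0.sum + 2 by omega)
        omega
      have := step_lt 2 (3 * ((t0.sum + 1) * (t0.sum + 2))) x0 t0 hx02 hv0 iht0.2.2.2
      calc 2 * Nn (x0 ::ₘ t0) < 3 * ((t0.sum + 1) * (t0.sum + 2)) * Dn (x0 ::ₘ t0) := this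
        _ ≤ 3 * (((x0 ::ₘ t0).sum + 1) * ((x0 ::ₘ t0).sum + 2)) * Dn (x0 ::ₘ t0) :=
            Nat.mul_le_mul_right _ hle

/-- Bounds in the presence of entries equal to `1`. -/
lemma ones : ∀ (n : ℕ) (l : Multiset ℕ), l.sum = n → (∀ x ∈ l, 0 < x) →
    (1 ≤ l.count 1 → Nn l < 11 * Dn l) ∧ (2 ≤ l.count 1 → Nn l < 3 * Dn l) := by
  intro n
  induction n using Nat.strong_induction_on with
  | _ n ih =>
  intro l hln hpos
  rcases Nat.lt_or_ge (l.count 1) 1 with h0 | h1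
  · exact ⟨fun h => absurd h (by omega), fun h => absurd h (by omega)⟩
  · have hmem : (1:ℕ) ∈ l := Multiset.count_pos.1 (by omega)
    obtain ⟨t, rfl⟩ := Multiset.exists_cons_of_mem hmem
    have hsum : ((1:ℕ) ::ₘ t).sum = 1 + t.sum := Multiset.sum_cons _ _
    have hpt : ∀ x ∈ t, 0 < x := fun x hx => hpos x (Multiset.mem_cons_of_mem hx)
    have hN : Nn ((1:ℕ) ::ₘ t) = 3 * (t.count 1 + 1) * Nn t := by
      rw [Nn_cons]
      norm_num [show JC 1 = 1 from rfl]
    have hD : Dn ((1:ℕ) ::ₘ t) = 3 * (t.sum + 1) * Dn t := by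
      rw [Dn_cons]
      have hasc : (t.sum + 1).ascFactorial 1 = t.sum + 1 := by
        simp [Nat.ascFactorial]
      rw [hasc]; ring
    have hcount : ((1:ℕ) ::ₘ t).count 1 = t.count 1 + 1 := Multiset.count_cons_self _ _
    have hc1sum : t.count 1 ≤ t.sum := by
      have := count_mul_le_sum t 1
      omega
    have part2 : 2 ≤ ((1:ℕ) ::ₘ t).count 1 → Nn ((1:ℕ) ::ₘ t) < 3 * Dn ((1:ℕ) ::ₘ t) := by
      intro h2c
      rw [hcount] at h2c
      rcases Nat.lt_or_ge (t.count 1) 2 with hc1 | hc2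
      · -- exactly two 1's in l
        have htc : t.count 1 = 1 := by omega
        have hmem' : (1:ℕ) ∈ t := Multiset.count_pos.1 (by omega)
        obtain ⟨u, rfl⟩ := Multiset.exists_cons_of_mem hmem'
        have huc : u.count 1 = 0 := by
          have : ((1:ℕ) ::ₘ u).count 1 = u.count 1 + 1 := Multiset.count_cons_self _ _
          omega
        have hu2 : ∀ x ∈ u, 2 ≤ x := by
          intro x hx
          have hp := hpt x (Multiset.mem_cons_of_mem hx)
          have : x ≠ 1 := by
            intro h; subst h
            exact absurd (Multiset.count_pos.2 hx) (by omega)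
          omega
        have hm := (master u.sum u rfl hu2).2.2.2
        have hNt : Nn ((1:ℕ) ::ₘ u) = 3 * Nn u := by
          rw [Nn_cons]
          norm_num [show JC 1 = 1 from rfl, huc]
        have hDt : Dn ((1:ℕ) ::ₘ u) = 3 * (u.sum + 1) * Dn u := by
          rw [Dn_cons]
          have hasc : (u.sum + 1).ascFactorial 1 = u.sum + 1 := by
            simp [Nat.ascFactorial]
          rw [hasc]; ring
        rw [hN, hD, hNt, hDt, htc]
        have hsums : ((1:ℕ) ::ₘ u).sum = 1 + u.sum := Multiset.sum_cons _ _
        rw [hsums]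
        nlinarith [Dn_pos u, hm]
      · -- at least three 1's: induct
        have iht := (ih t.sum (by omega) t rfl hpt).2 hc2
        rw [hN, hD]
        nlinarith [Dn_pos t, iht, hc1sum]
    refine ⟨?_, part2⟩
    intro _
    rcases Nat.lt_or_ge (((1:ℕ) ::ₘ t).count 1) 2 with hc1 | hc2
    · -- exactly one 1 in l
      have htc : t.count 1 = 0 := by omega
      have ht2 : ∀ x ∈ t, 2 ≤ x := by
        intro x hx
        have hp := hpt x hx
        have : x ≠ 1 := by
          intro h; subst h
          exact absurd (Multiset.count_pos.2 hx) (by omega)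
        omega
      have hm := (master t.sum t rfl ht2).2.2.1
      rw [hN, hD, htc]
      nlinarith [Dn_pos t, hm]
    · have := part2 hc2
      have := Dn_pos ((1:ℕ) ::ₘ t)
      omega

/-- Conversion: a bound on the `d = 3` integer data gives a bound on `FTR l d` for `d ≥ 3`. -/
lemma conv (l : Multiset ℕ) (d p : ℕ) (hd : 3 ≤ d) (hpos : ∀ x ∈ l, 0 < x)
    (h : Nn l < p * Dn l) : FTR l d < (p : ℚ) := by
  have hsv : Multiset.card l ≤ l.sum := card_le_sum l hpos
  set s := Multiset.card l with hs
  set v := l.sum with hv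
  set P := (l.map JC).prod * ∏ x ∈ l.toFinset, (l.count x).factorial with hP
  have hNn : Nn l = 3 ^ s * P := by rw [Nn, hP, mul_assoc]
  have hDn : Dn l = 3 ^ v * v.factorial := rfl
  have h1 : 3 ^ v * d ^ s ≤ 3 ^ s * d ^ v := by
    have hpow3 : (3:ℕ) ^ v = 3 ^ s * 3 ^ (v - s) := by
      rw [← pow_add]; congr 1; omega
    have hpowd : (d:ℕ) ^ v = d ^ s * d ^ (v - s) := by
      rw [← pow_add]; congr 1; omega
    calc 3 ^ v * d ^ s = 3 ^ s * 3 ^ (v - s) * d ^ s := by rw [hpow3]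
      _ ≤ 3 ^ s * d ^ (v - s) * d ^ s := by
          have : (3:ℕ) ^ (v - s) ≤ d ^ (v - s) := Nat.pow_le_pow_left hd _
          exact Nat.mul_le_mul_right _ (Nat.mul_le_mul_left _ this)
      _ = 3 ^ s * d ^ v := by rw [hpowd]; ring
  have key : d ^ s * P < p * (d ^ v * v.factorial) := by
    have h2 : 3 ^ v * (d ^ s * P) ≤ 3 ^ s * d ^ v * P := by
      calc 3 ^ v * (d ^ s * P) = (3 ^ v * d ^ s) * P := by ring
        _ ≤ (3 ^ s * d ^ v) * P := Nat.mul_le_mul_right _ h1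
    have h3 : 3 ^ s * d ^ v * P = d ^ v * Nn l := by rw [hNn]; ring
    have h4 : d ^ v * Nn l < d ^ v * (p * Dn l) := by
      have hdv : 0 < d ^ v := Nat.pow_pos (by omega)
      exact (Nat.mul_lt_mul_left hdv).2 h
    have h5 : d ^ v * (p * Dn l) = 3 ^ v * (p * (d ^ v * v.factorial)) := by
      rw [hDn]; ring
    have h6 : 3 ^ v * (d ^ s * P) < 3 ^ v * (p * (d ^ v * v.factorial)) := by
      calc 3 ^ v * (d ^ s * P) ≤ 3 ^ s * d ^ v * P := h2
        _ = d ^ v * Nn l := h3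
        _ < d ^ v * (p * Dn l) := h4
        _ = 3 ^ v * (p * (d ^ v * v.factorial)) := h5
    exact Nat.lt_of_mul_lt_mul_left h6
  have hden : (0:ℚ) < ((d ^ v * v.factorial : ℕ) : ℚ) := by
    have : 0 < d ^ v * v.factorial := Nat.mul_pos (Nat.pow_pos (by omega))
      (Nat.factorial_pos _)
    exact_mod_cast this
  rw [FTR, div_lt_iff₀ hden]
  have : d ^ s * (l.map JC).prod * ∏ x ∈ l.toFinset, (l.count x).factorial
      < p * (d ^ v * v.factorial) := by
    rw [mul_assoc]
    exact key
  calc ((d ^ s * (l.map JC).prod * ∏ x ∈ l.toFinset, (l.count x).factorial : ℕ) : ℚ)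
      < ((p * (d ^ v * v.factorial) : ℕ) : ℚ) := by exact_mod_cast this
    _ = (p : ℚ) * ((d ^ v * v.factorial : ℕ) : ℚ) := by push_cast; ring

end FTRBounds

/-- uniform bounds on the Fermat-test ratio, in terms of the multiplicity
`a` of the entry `1`. -/
theorem FTR_uniform_bounds
    (l : Multiset ℕ) (hl : IsSubdegreeSeq l)
    (d : ℕ) (hd : 3 ≤ d) :
    FTR l d < 106 ∧
    (2 ≤ l.toFinset.card → FTR l d < 60) ∧
    (1 ≤ l.count 1 → FTR l d < 11) ∧
    (2 ≤ l.count 1 → FTR l d < 3) := by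
  obtain ⟨hne, hpos⟩ := hl
  by_cases h1 : 1 ≤ l.count 1
  · have hones := FTRBounds.ones l.sum l rfl hpos
    have k11 : FTRBounds.Nn l < 11 * FTRBounds.Dn l := hones.1 h1
    have hD := FTRBounds.Dn_pos l
    refine ⟨?_, fun _ => ?_, fun _ => ?_, fun h2c => ?_⟩
    · exact_mod_cast FTRBounds.conv l d 106 hd hpos (by omega)
    · exact_mod_cast FTRBounds.conv l d 60 hd hpos (by omega)
    · exact_mod_cast FTRBounds.conv l d 11 hd hpos k11
    · exact_mod_cast FTRBounds.conv l d 3 hd hpos (hones.2 h2c)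
  · have h2' : ∀ x ∈ l, 2 ≤ x := by
      intro x hx
      have := hpos x hx
      have hx1 : x ≠ 1 := by
        intro h; subst h
        exact h1 (Multiset.count_pos.2 hx)
      omega
    have hm := FTRBounds.master l.sum l rfl h2'
    refine ⟨?_, fun hm2 => ?_, fun hc => absurd hc h1, fun hc => absurd hc (by omega)⟩
    · exact_mod_cast FTRBounds.conv l d 106 hd hpos hm.1
    · exact_mod_cast FTRBounds.conv l d 60 hd hpos (hm.2.1 hm2)
end

section
/- Let m ≥ 2 and let n_1,…,n_m be positive integers. For each i, let q_i be the rational number defined by q_i = 5/2 if n_i ≥ 2 and q_i = 1 if n_i = 1. If (Π_{i=1}^m q_i·(n_i)!) / (n_1 + ⋯ + n_m)! ≥ 1, then m = 2 and n_1 = n_2 = 2. -/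
open Finset

-- L1 : a + b ≤ C(a+b, a) for a,b ≥ 1
lemma L1 : ∀ a b : ℕ, 1 ≤ a → 1 ≤ b → a + b ≤ (a + b).choose a := by
  intro a
  induction a with
  | zero => omega
  | succ a ih =>
    intro b _ hb
    rcases Nat.eq_or_lt_of_le (Nat.one_le_iff_ne_zero.mpr (by omega) : 1 ≤ a + 1) with h | h
    · simp [← h, Nat.choose_one_right]
    · have ha : 1 ≤ a := by omega
      have h1 := ih b ha hb
      have h2 : 1 ≤ (a + b).choose (a + 1) :=
        Nat.choose_pos (by omega)
      have : (a + 1 + b).choose (a + 1) = (a + b).choose a + (a + b).choose (a + 1) := by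
        have := Nat.choose_succ_succ (a + b) a
        rw [show a + 1 + b = (a + b) + 1 by omega, this]
      omega

-- L2 : pair case
lemma L2 (a b : ℕ) (ha : 2 ≤ a) (hb : 2 ≤ b) (h : (a + b).choose a ≤ 6) :
    a = 2 ∧ b = 2 := by
  have h1 := L1 a b (by omega) (by omega)
  have hab : a + b ≤ 6 := le_trans h1 h
  have ha4 : a ≤ 4 := by omega
  have hb4 : b ≤ 4 := by omega
  interval_cases a <;> interval_cases b <;> revert h <;> decide

lemma aux {ι : Type*} [DecidableEq ι] (n : ι → ℕ) :
    ∀ s : Finset ι, (∀ i ∈ s, 1 ≤ n i) → 2 ≤ s.card →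
    2 ^ (s.filter fun i => 2 ≤ n i).card * Nat.multinomial s n ≤
      5 ^ (s.filter fun i => 2 ≤ n i).card →
    s.card = 2 ∧ ∀ i ∈ s, n i = 2 := by
  intro s
  induction s using Finset.induction_on with
  | empty => simp
  | @insert a s ha ih =>
    intro hpos hcard hineq
    have hT : s.card ≤ ∑ i ∈ s, n i := by
      calc s.card = ∑ i ∈ s, 1 := by simp
        _ ≤ ∑ i ∈ s, n i := Finset.sum_le_sum fun i hi => hpos i (Finset.mem_insert_of_mem hi)
    have hM := Nat.multinomial_insert ha n
    have hfilter : ((insert a s).filter fun i => 2 ≤ n i)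
        = if 2 ≤ n a then insert a (s.filter fun i => 2 ≤ n i) else s.filter fun i => 2 ≤ n i :=
      Finset.filter_insert _ _ _
    have hafil : a ∉ s.filter fun i => 2 ≤ n i := fun h => ha (Finset.mem_of_mem_filter _ h)
    set k := (s.filter fun i => 2 ≤ n i).card with hk
    set T := ∑ i ∈ s, n i with hTdef
    set M := Nat.multinomial s n with hMdef
    have hMpos : 0 < M := Nat.multinomial_pos _ _
    have hna : 1 ≤ n a := hpos a (Finset.mem_insert_self a s)
    rcases Nat.lt_or_ge s.card 2 with hsc | hsc
    · -- base : s.card = 1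
      have hsc1 : s.card = 1 := by
        rw [Finset.card_insert_of_notMem ha] at hcard; omega
      obtain ⟨b, hb⟩ := Finset.card_eq_one.mp hsc1
      subst hb
      have hnb : 1 ≤ n b := hpos b (by simp)
      simp only [Finset.sum_singleton] at hTdef
      have hMs : M = 1 := by simp [hMdef]
      have hC := L1 (n a) (n b) hna hnb
      constructor
      · simp [Finset.card_insert_of_notMem ha]
      · -- need contradiction or values
        have key : n a = 2 ∧ n b = 2 := by
          by_cases h2a : 2 ≤ n a <;> by_cases h2b : 2 ≤ n b
          · -- both ≥ 2 : k total = 2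
            rw [hfilter] at hineq
            simp only [h2a, if_pos] at hineq
            have hk2 : (insert a (Finset.filter (fun i => 2 ≤ n i) {b})).card = 2 := by
              rw [Finset.card_insert_of_notMem hafil]
              simp [Finset.filter_singleton, h2b]
            rw [hk2, hM, hMs, hTdef] at hineq
            have : (n a + n b).choose (n a) ≤ 6 := by
              norm_num at hineq; omega
            exact L2 (n a) (n b) h2a h2b this
          · -- n a ≥ 2, n b = 1
            exfalso
            have hnb1 : n b = 1 := by omega
            rw [hfilter] at hineq
            simp only [h2a, if_pos] at hineq
            have hk1 : (insert a (Finset.filter (fun i => 2 ≤ n i) {b})).card = 1 := by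
              rw [Finset.card_insert_of_notMem hafil]
              simp [Finset.filter_singleton, h2b]
            rw [hk1, hM, hMs, hTdef, hnb1] at hineq
            have : n a + 1 ≤ (n a + 1).choose (n a) := L1 (n a) 1 hna le_rfl
            have h6 : 3 ≤ (n a + 1).choose (n a) := by omega
            omega
          · -- n a = 1, n b ≥ 2
            exfalso
            have hna1 : n a = 1 := by omega
            rw [hfilter] at hineq
            simp only [h2a, if_neg, if_false] at hineq
            have hk1 : (Finset.filter (fun i => 2 ≤ n i) {b}).card = 1 := by
              simp [Finset.filter_singleton, h2b]
            rw [hk1, hM, hMs, hTdef, hna1] at hineq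
            simp [Nat.choose_one_right] at hineq
            omega
          · -- both = 1
            exfalso
            have hna1 : n a = 1 := by omega
            have hnb1 : n b = 1 := by omega
            rw [hfilter] at hineq
            simp only [h2a, if_neg, if_false] at hineq
            have hk0 : (Finset.filter (fun i => 2 ≤ n i) {b}).card = 0 := by
              simp [Finset.filter_singleton, h2b]
            rw [hk0, hM, hMs, hTdef, hna1, hnb1] at hineq
            simp at hineq
        intro i hi
        rcases Finset.mem_insert.mp hi with rfl | hi
        · exact key.1
        · rw [Finset.mem_singleton.mp hi]; exact key.2
    · -- step : s.card ≥ 2 : always contradiction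
      exfalso
      have hT2 : 2 ≤ T := le_trans hsc hT
      have hC : n a + T ≤ (n a + T).choose (n a) := L1 (n a) T hna (by omega)
      set C := (n a + T).choose (n a) with hCdef
      have hC3 : 3 ≤ C := by omega
      -- derive IH hypothesis
      have hIHhyp : 2 ^ k * M ≤ 5 ^ k := by
        rw [hfilter] at hineq
        by_cases h2a : 2 ≤ n a
        · simp only [h2a, if_pos] at hineq
          rw [Finset.card_insert_of_notMem hafil, hM] at hineq
          -- 2^(k+1) * (C * M) ≤ 5^(k+1)
          have : 5 * (2 ^ k * M) ≤ 2 * C * (2 ^ k * M) := by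
            have : 5 ≤ 2 * C := by omega
            exact Nat.mul_le_mul_right _ this
          have h5 : 5 * (2 ^ k * M) ≤ 5 * 5 ^ k := by
            calc 5 * (2 ^ k * M) ≤ 2 * C * (2 ^ k * M) := this
              _ = 2 ^ (k + 1) * (C * M) := by ring
              _ ≤ 5 ^ (k + 1) := hineq
              _ = 5 * 5 ^ k := by ring
          exact Nat.le_of_mul_le_mul_left h5 (by norm_num)
        · simp only [h2a, if_neg, if_false] at hineq
          rw [hM] at hineq
          calc 2 ^ k * M ≤ 2 ^ k * (C * M) := Nat.mul_le_mul_left _ (Nat.le_mul_of_pos_left _ (by omega))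
            _ ≤ 5 ^ k := hineq
      obtain ⟨hcard2, hall2⟩ := ih (fun i hi => hpos i (Finset.mem_insert_of_mem hi)) hsc hIHhyp
      -- now T = 4, M = 6, k = 2
      have hT4 : T = 4 := by
        rw [hTdef]
        obtain ⟨b, c, hbc, rfl⟩ := Finset.card_eq_two.mp hcard2
        rw [Finset.sum_pair hbc, hall2 b (by simp), hall2 c (by simp)]
      have hk2 : k = 2 := by
        rw [hk]
        have : s.filter (fun i => 2 ≤ n i) = s := by
          apply Finset.filter_true_of_mem
          intro i hi; rw [hall2 i hi]
        rw [this, hcard2]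
      have hM6 : M = 6 := by
        rw [hMdef]
        obtain ⟨b, c, hbc, rfl⟩ := Finset.card_eq_two.mp hcard2
        have h2 : Nat.multinomial {b, c} n
            = (n b + n c).choose (n b) * Nat.multinomial {c} n := by
          exact Nat.multinomial_insert (by simp [hbc]) n |>.trans (by rw [Finset.sum_singleton])
        rw [h2, hall2 b (by simp), hall2 c (by simp)]
        simp
        decide
      rw [hfilter] at hineq
      by_cases h2a : 2 ≤ n a
      · simp only [h2a, if_pos] at hineq
        rw [Finset.card_insert_of_notMem hafil, hM] at hineq
        rw [← hk, hk2, hM6] at hineq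
        norm_num at hineq
        omega
      · simp only [h2a, if_neg, if_false] at hineq
        rw [hM] at hineq
        rw [← hk, hk2, hM6] at hineq
        norm_num at hineq
        omega

/-- if `(∏ qᵢ·nᵢ!)/(n₁+⋯+n_m)! ≥ 1` with `qᵢ = 5/2` for `nᵢ ≥ 2` and
`qᵢ = 1` for `nᵢ = 1`, then `m = 2` and all `nᵢ = 2`. -/
theorem factorial_ratio_product
    (m : ℕ) (hm : 2 ≤ m) (n : Fin m → ℕ) (hn : ∀ i, 1 ≤ n i)
    (q : Fin m → ℚ) (hq : ∀ i, q i = if 2 ≤ n i then (5 / 2 : ℚ) else 1)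
    (h : 1 ≤ (∏ i, q i * (n i).factorial) / ((∑ i, n i).factorial : ℚ)) :
    m = 2 ∧ ∀ i, n i = 2 := by
  classical
  set k := (Finset.univ.filter fun i : Fin m => 2 ≤ n i).card with hk
  have hq' : ∏ i, q i = (5 / 2 : ℚ) ^ k := by
    calc ∏ i, q i = ∏ i, (if 2 ≤ n i then (5 / 2 : ℚ) else 1) :=
          Finset.prod_congr rfl fun i _ => hq i
      _ = (5 / 2 : ℚ) ^ k := by
          rw [Finset.prod_ite, Finset.prod_const, Finset.prod_const, one_pow, mul_one]
  have hfac : (0 : ℚ) < ((∑ i, n i).factorial : ℚ) := by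
    exact_mod_cast Nat.factorial_pos _
  rw [le_div_iff₀ hfac, one_mul] at h
  have hsplit : ∏ i, q i * ((n i).factorial : ℚ)
      = (5 / 2 : ℚ) ^ k * ∏ i, ((n i).factorial : ℚ) := by
    rw [Finset.prod_mul_distrib, hq']
  rw [hsplit] at h
  have h2 : (2 : ℚ) ^ k * ((∑ i, n i).factorial : ℚ)
      ≤ 5 ^ k * ∏ i, ((n i).factorial : ℚ) := by
    have h' := mul_le_mul_of_nonneg_left h (by positivity : (0:ℚ) ≤ 2 ^ k)
    have key : (2:ℚ) ^ k * ((5 / 2 : ℚ) ^ k * ∏ i, ((n i).factorial : ℚ))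
        = 5 ^ k * ∏ i, ((n i).factorial : ℚ) := by
      rw [← mul_assoc, ← mul_pow]; norm_num
    rwa [key] at h'
  have h3 : 2 ^ k * (∑ i, n i).factorial ≤ 5 ^ k * ∏ i, (n i).factorial := by
    exact_mod_cast h2
  have hspec := Nat.multinomial_spec Finset.univ n
  rw [← hspec] at h3
  have hPpos : 0 < ∏ i, (n i).factorial := Finset.prod_pos fun i _ => (n i).factorial_pos
  have h4 : 2 ^ k * Nat.multinomial Finset.univ n ≤ 5 ^ k := by
    refine Nat.le_of_mul_le_mul_right ?_ hPpos
    calc 2 ^ k * Nat.multinomial Finset.univ n * ∏ i, (n i).factorial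
        = 2 ^ k * ((∏ i, (n i).factorial) * Nat.multinomial Finset.univ n) := by ring
      _ ≤ 5 ^ k * ∏ i, (n i).factorial := h3
  obtain ⟨h5, h6⟩ := aux n Finset.univ (fun i _ => hn i) (by simpa using hm) h4
  exact ⟨by simpa using h5, fun i => h6 i (Finset.mem_univ i)⟩
end
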